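/- Let (β, ◁) = (E, #, ↦, l, ◁) be a prioritized Bundle Event Structure and define ◁' = ◁ ∖ { (e,e'), (e',e) | e # e' ∨ ∃X ⊆ E, e ∈ X ∧ X ↦ e' }. Then the traces of (β, ◁) equal the traces of (β, ◁'). (Priority pairs between conflicting events or between an event and a member of one of its bundle sets are redundant.) -/

import Mathlib

/-- Enabled events of a Bundle Event Structure after the sequence `σ`. -/
def ben {E : Type*} (conf : E → E → Prop) (bund : Set E → E → Prop) (σ : List E) : Set E :=
  {e | e ∉ σ ∧ (∀ X, bund X e → ∃ x ∈ X, x ∈ σ) ∧ ¬ ∃ e' ∈ σ, conf e e'}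

/-- `σ` is a trace w.r.t. the enabling function `en`. -/
def IsTrace {E : Type*} (en : List E → Set E) (σ : List E) : Prop :=
  ∀ i : Fin σ.length, σ.get i ∈ en (σ.take i)

/-- The priority condition on a sequence `σ`. -/
def PrioOK {E : Type*} (en : List E → Set E) (prio : E → E → Prop) (σ : List E) : Prop :=
  ∀ i, i < σ.length → ∀ j h : Fin σ.length,
    σ.get j ≠ σ.get h → σ.get j ∈ en (σ.take i) → σ.get h ∈ en (σ.take i) →
    prio (σ.get h) (σ.get j) → (j : ℕ) < h

/-- In a trace, two conflicting events cannot both occur. -/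
lemma trace_no_conf {E : Type*} {conf : E → E → Prop} {bund : Set E → E → Prop}
    (hirr : ∀ e, ¬ conf e e) (hsym : ∀ e e', conf e e' → conf e' e)
    {σ : List E} (ht : IsTrace (ben conf bund) σ)
    {a b : E} (ha : a ∈ σ) (hb : b ∈ σ) (hc : conf a b) : False := by
  obtain ⟨p, hp⟩ := List.mem_iff_get.mp ha
  obtain ⟨q, hq⟩ := List.mem_iff_get.mp hb
  rcases lt_trichotomy (p : ℕ) (q : ℕ) with hlt | heq | hlt
  · have hmem : a ∈ σ.take q := by
      have h1 : (σ.take q)[(p : ℕ)]'(by simp only [List.length_take]; exact lt_min hlt p.isLt) = σ[(p : ℕ)] :=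
        List.getElem_take
      rw [← hp, List.get_eq_getElem, ← h1]
      exact List.getElem_mem _
    exact (ht q).2.2 ⟨a, hmem, hq ▸ hsym a b hc⟩
  · have hab : a = b := by rw [← hp, ← hq, Fin.ext heq]
    exact hirr b (hab ▸ hc)
  · have hmem : b ∈ σ.take p := by
      have h1 : (σ.take p)[(q : ℕ)]'(by simp only [List.length_take]; exact lt_min hlt q.isLt) = σ[(q : ℕ)] :=
        List.getElem_take
      rw [← hq, List.get_eq_getElem, ← h1]
      exact List.getElem_mem _
    exact (ht p).2.2 ⟨b, hmem, hp ▸ hc⟩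

/-- priority pairs between conflicting events, or between an event and a
member of one of its bundle sets, are redundant in a prioritized BES. -/
theorem pbes_priority_reduction {E : Type*} (conf : E → E → Prop) (bund : Set E → E → Prop)
    (prio : E → E → Prop)
    (hirr : ∀ e, ¬ conf e e) (hsym : ∀ e e', conf e e' → conf e' e)
    (hstab : ∀ X e, bund X e → ∀ e1 ∈ X, ∀ e2 ∈ X, e1 ≠ e2 → conf e1 e2)
    (hacyc : ∀ e, ¬ Relation.TransGen prio e e) :
    {σ : List E | IsTrace (ben conf bund) σ ∧ PrioOK (ben conf bund) prio σ} =
      {σ : List E | IsTrace (ben conf bund) σ ∧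
        PrioOK (ben conf bund)
          (fun e e' => prio e e' ∧
            ¬ (conf e e' ∨ conf e' e ∨ (∃ X, e ∈ X ∧ bund X e') ∨
               (∃ X, e' ∈ X ∧ bund X e))) σ} := by
  ext σ
  simp only [Set.mem_setOf_eq]
  constructor
  · rintro ⟨ht, hp⟩
    exact ⟨ht, fun i hi j h hne hj hh hpr => hp i hi j h hne hj hh hpr.1⟩
  · rintro ⟨ht, hp⟩
    refine ⟨ht, fun i hi j h hne hj hh hpr => ?_⟩
    refine hp i hi j h hne hj hh ⟨hpr, ?_⟩
    have hjmem : σ.get j ∈ σ := List.get_mem σ j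
    have hhmem : σ.get h ∈ σ := List.get_mem σ h
    rintro (hc | hc | ⟨X, hmX, hb⟩ | ⟨X, hmX, hb⟩)
    · exact trace_no_conf hirr hsym ht hhmem hjmem hc
    · exact trace_no_conf hirr hsym ht hjmem hhmem hc
    · -- σ.get h ∈ X, bund X (σ.get j); σ.get j enabled needs some x ∈ X ∩ take i
      obtain ⟨x, hxX, hxmem⟩ := hj.2.1 X hb
      by_cases hx : x = σ.get h
      · exact hh.1 (hx ▸ hxmem)
      · exact trace_no_conf hirr hsym ht (List.mem_of_mem_take hxmem) hhmem
          (hstab X _ hb x hxX _ hmX hx)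
    · obtain ⟨x, hxX, hxmem⟩ := hh.2.1 X hb
      by_cases hx : x = σ.get j
      · exact hj.1 (hx ▸ hxmem)
      · exact trace_no_conf hirr hsym ht (List.mem_of_mem_take hxmem) hjmem
          (hstab X _ hb x hxX _ hmX hx)
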